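/- Let ξ and η be positive irrational real numbers and m a positive natural number with ξ·η = m. Suppose the indices (n, k) with n ≥ 1 and k ≥ 1 are connected, and set r = p_{n−1}/Q_{k−1}, s = P_{k−1}/q_{n−1} (natural numbers with r·s = m). Then r·ξ_n − s·η_k is an integer t satisfying −r + 1 ≤ t ≤ s − 1. -/

import Mathlib

/-- Complete quotients: `cq ξ 0 = ξ`, `cq ξ (n+1) = 1/(cq ξ n - ⌊cq ξ n⌋)`. -/
noncomputable def cq (ξ : ℝ) : ℕ → ℝ
  | 0 => ξ
  | n + 1 => 1 / (cq ξ n - ⌊cq ξ n⌋)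

/-- Partial quotients: `pquot ξ n = b_n = ⌊ξ_n⌋`. -/
noncomputable def pquot (ξ : ℝ) (n : ℕ) : ℤ := ⌊cq ξ n⌋

/-- Convergent numerators, shifted by one: `cnum ξ 0 = p_{-1} = 1`,
`cnum ξ 1 = p_0 = b_0`, and `cnum ξ (n+1) = p_n = b_n p_{n-1} + p_{n-2}`. -/
noncomputable def cnum (ξ : ℝ) : ℕ → ℤ
  | 0 => 1
  | 1 => pquot ξ 0
  | n + 2 => pquot ξ (n + 1) * cnum ξ (n + 1) + cnum ξ n

/-- Convergent denominators, shifted by one: `cden ξ 0 = q_{-1} = 0`,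
`cden ξ 1 = q_0 = 1`, and `cden ξ (n+1) = q_n = b_n q_{n-1} + q_{n-2}`. -/
noncomputable def cden (ξ : ℝ) : ℕ → ℤ
  | 0 => 0
  | 1 => 1
  | n + 2 => pquot ξ (n + 1) * cden ξ (n + 1) + cden ξ n

lemma cq_irrational (ξ : ℝ) (h : Irrational ξ) : ∀ n, Irrational (cq ξ n)
  | 0 => h
  | n + 1 => by
    have ih := cq_irrational ξ h n
    have h1 : Irrational (cq ξ n - ⌊cq ξ n⌋) := ih.sub_intCast _
    show Irrational (1 / (cq ξ n - ⌊cq ξ n⌋))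
    rw [one_div]
    exact h1.inv

lemma fract_ne_zero (ξ : ℝ) (h : Irrational ξ) (n : ℕ) :
    cq ξ n - (⌊cq ξ n⌋ : ℝ) ≠ 0 := by
  intro h0
  exact (cq_irrational ξ h n) ⟨⌊cq ξ n⌋, by push_cast; linarith⟩

lemma one_lt_cq (ξ : ℝ) (h : Irrational ξ) (n : ℕ) : 1 < cq ξ (n + 1) := by
  have hf0 := fract_ne_zero ξ h n
  have hge : (⌊cq ξ n⌋ : ℝ) ≤ cq ξ n := Int.floor_le _
  have hlt : cq ξ n < ⌊cq ξ n⌋ + 1 := Int.lt_floor_add_one _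
  have hpos : 0 < cq ξ n - ⌊cq ξ n⌋ := lt_of_le_of_ne (by linarith) (Ne.symm hf0)
  have hlt1 : cq ξ n - ⌊cq ξ n⌋ < 1 := by linarith
  show 1 < 1 / (cq ξ n - ⌊cq ξ n⌋)
  rw [lt_div_iff₀ hpos]
  linarith

lemma pquot_ge_one (ξ : ℝ) (h : Irrational ξ) (n : ℕ) : 1 ≤ pquot ξ (n + 1) := by
  have := one_lt_cq ξ h n
  exact Int.le_floor.mpr (by push_cast; linarith)

lemma cden_nonneg (ξ : ℝ) (h : Irrational ξ) : ∀ n, 0 ≤ cden ξ n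
  | 0 => le_refl 0
  | 1 => zero_le_one
  | n + 2 => by
    have h1 := cden_nonneg ξ h (n + 1)
    have h2 := cden_nonneg ξ h n
    have hb := pquot_ge_one ξ h n
    show 0 ≤ pquot ξ (n + 1) * cden ξ (n + 1) + cden ξ n
    nlinarith

lemma cden_ge_one (ξ : ℝ) (h : Irrational ξ) : ∀ n, 1 ≤ cden ξ (n + 1)
  | 0 => le_refl 1
  | n + 1 => by
    have h1 := cden_ge_one ξ h n
    have h2 := cden_nonneg ξ h n
    have hb := pquot_ge_one ξ h n
    show 1 ≤ pquot ξ (n + 1) * cden ξ (n + 1) + cden ξ n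
    nlinarith

lemma cden_mono (ξ : ℝ) (h : Irrational ξ) : ∀ n, cden ξ n ≤ cden ξ (n + 1)
  | 0 => zero_le_one
  | n + 1 => by
    have h1 := cden_ge_one ξ h n
    have h2 := cden_nonneg ξ h n
    have hb := pquot_ge_one ξ h n
    show cden ξ (n+1) ≤ pquot ξ (n + 1) * cden ξ (n + 1) + cden ξ n
    nlinarith

lemma cden_add_le (ξ : ℝ) (h : Irrational ξ) (n : ℕ) :
    cden ξ (n + 1) + cden ξ n ≤ cden ξ (n + 2) := by
  have h1 := cden_ge_one ξ h n
  have hb := pquot_ge_one ξ h n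
  show cden ξ (n+1) + cden ξ n ≤ pquot ξ (n + 1) * cden ξ (n + 1) + cden ξ n
  nlinarith

lemma cnum_nonneg (ξ : ℝ) (h : Irrational ξ) (hb0 : 0 ≤ pquot ξ 0) : ∀ n, 0 ≤ cnum ξ n
  | 0 => zero_le_one
  | 1 => hb0
  | n + 2 => by
    have h1 := cnum_nonneg ξ h hb0 (n + 1)
    have h2 := cnum_nonneg ξ h hb0 n
    have hbn := pquot_ge_one ξ h n
    show 0 ≤ pquot ξ (n + 1) * cnum ξ (n + 1) + cnum ξ n
    nlinarith

lemma cnum_mono (ξ : ℝ) (h : Irrational ξ) (hb0 : 0 ≤ pquot ξ 0) :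
    ∀ n, cnum ξ (n + 1) ≤ cnum ξ (n + 2)
  | 0 => by
    have hbn := pquot_ge_one ξ h 0
    have h0 : cnum ξ 1 = pquot ξ 0 := rfl
    show cnum ξ 1 ≤ pquot ξ 1 * cnum ξ 1 + cnum ξ 0
    have h1 : cnum ξ 0 = 1 := rfl
    nlinarith
  | n + 1 => by
    have h1 := cnum_nonneg ξ h hb0 (n + 1)
    have h2 := cnum_nonneg ξ h hb0 (n + 2)
    have hbn := pquot_ge_one ξ h (n + 1)
    show cnum ξ (n + 2) ≤ pquot ξ (n + 2) * cnum ξ (n + 2) + cnum ξ (n + 1)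
    nlinarith

lemma cnum_add_le (ξ : ℝ) (h : Irrational ξ) (hb0 : 0 ≤ pquot ξ 0) (n : ℕ) :
    cnum ξ (n + 1) + cnum ξ n ≤ cnum ξ (n + 2) := by
  have h1 := cnum_nonneg ξ h hb0 (n + 1)
  have hbn := pquot_ge_one ξ h n
  show cnum ξ (n+1) + cnum ξ n ≤ pquot ξ (n + 1) * cnum ξ (n + 1) + cnum ξ n
  nlinarith

lemma cnum_even_ge_one (ξ : ℝ) (h : Irrational ξ) (hb0 : 0 ≤ pquot ξ 0) :
    ∀ j, 1 ≤ cnum ξ (2 * j)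
  | 0 => le_refl 1
  | j + 1 => by
    have h1 := cnum_even_ge_one ξ h hb0 j
    have h2 := cnum_nonneg ξ h hb0 (2 * j + 1)
    have hbn := pquot_ge_one ξ h (2 * j)
    have he : cnum ξ (2 * (j + 1)) = pquot ξ (2 * j + 1) * cnum ξ (2 * j + 1) + cnum ξ (2 * j) := by
      have h3 : 2 * (j + 1) = (2 * j) + 2 := by ring
      rw [h3]; rfl
    rw [he]
    nlinarith

lemma cnum_ge_one_of_two (ξ : ℝ) (h : Irrational ξ) (hb0 : 0 ≤ pquot ξ 0) :
    ∀ j, 1 ≤ cnum ξ (j + 2)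
  | 0 => by
    have hb1 := pquot_ge_one ξ h 0
    show 1 ≤ pquot ξ 1 * cnum ξ 1 + cnum ξ 0
    have hc1 : cnum ξ 1 = pquot ξ 0 := rfl
    have hc0 : cnum ξ 0 = 1 := rfl
    rw [hc1, hc0]
    nlinarith
  | j + 1 => by
    have ih := cnum_ge_one_of_two ξ h hb0 j
    have h2 : 0 ≤ cnum ξ (j + 2) := le_trans zero_le_one ih
    have hbn := pquot_ge_one ξ h (j + 1)
    show 1 ≤ pquot ξ (j + 2) * cnum ξ (j + 2) + cnum ξ (j + 1)
    have h3 : 0 ≤ cnum ξ (j + 1) := by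
      cases j with
      | zero => exact hb0
      | succ i => exact le_trans zero_le_one (cnum_ge_one_of_two ξ h hb0 i)
    nlinarith

lemma det_eq (ξ : ℝ) : ∀ n, cnum ξ (n + 1) * cden ξ n - cnum ξ n * cden ξ (n + 1)
    = (-1) ^ (n + 1)
  | 0 => by
    show pquot ξ 0 * 0 - 1 * 1 = -1
    ring
  | n + 1 => by
    have ih := det_eq ξ n
    show (pquot ξ (n+1) * cnum ξ (n+1) + cnum ξ n) * cden ξ (n+1)
        - cnum ξ (n+1) * (pquot ξ (n+1) * cden ξ (n+1) + cden ξ n) = (-1)^(n+2)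
    have h2 : (-1 : ℤ)^(n+2) = -(-1)^(n+1) := by ring
    rw [h2]
    linear_combination -ih

lemma isCoprime_cnum_cden (ξ : ℝ) (n : ℕ) : IsCoprime (cnum ξ (n+1)) (cden ξ (n+1)) := by
  have h := det_eq ξ n
  have hsq : ((-1:ℤ)^(n+1)) * ((-1:ℤ)^(n+1)) = 1 := by
    rw [← pow_add]; exact Even.neg_one_pow ⟨n+1, rfl⟩
  exact ⟨(-1)^(n+1) * cden ξ n, -((-1)^(n+1) * cnum ξ n),
    by linear_combination ((-1:ℤ)^(n+1)) * h + hsq⟩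

lemma beta_rec (ξ : ℝ) (h : Irrational ξ) :
    ∀ n, ((cden ξ (n+1) : ℝ) * ξ - cnum ξ (n+1)) * cq ξ (n+1)
      + ((cden ξ n : ℝ) * ξ - cnum ξ n) = 0
  | 0 => by
    have hf0 := fract_ne_zero ξ h 0
    have hcq : cq ξ 1 = 1 / (cq ξ 0 - ⌊cq ξ 0⌋) := rfl
    rw [hcq, mul_one_div, add_eq_zero_iff_eq_neg, div_eq_iff hf0]
    have hc1 : cnum ξ 1 = pquot ξ 0 := rfl
    have hd1 : cden ξ 1 = 1 := rfl
    have hc0 : cnum ξ 0 = 1 := rfl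
    have hd0 : cden ξ 0 = 0 := rfl
    have h0 : cq ξ 0 = ξ := rfl
    rw [hc1, hd1, hc0, hd0, pquot, h0]
    push_cast
    ring
  | n + 1 => by
    have ih := beta_rec ξ h n
    have hf0 := fract_ne_zero ξ h (n + 1)
    have hcq : cq ξ (n+2) = 1 / (cq ξ (n+1) - ⌊cq ξ (n+1)⌋) := rfl
    have hc : cnum ξ (n+2) = pquot ξ (n+1) * cnum ξ (n+1) + cnum ξ n := rfl
    have hd : cden ξ (n+2) = pquot ξ (n+1) * cden ξ (n+1) + cden ξ n := rfl
    rw [hcq, mul_one_div, add_eq_zero_iff_eq_neg, div_eq_iff hf0, hc, hd, pquot]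
    push_cast
    linear_combination ih

lemma beta_sign (ξ : ℝ) (h : Irrational ξ) (hpos : 0 < ξ) :
    ∀ n, 0 < (-1 : ℝ) ^ (n + 1) * ((cden ξ n : ℝ) * ξ - cnum ξ n)
  | 0 => by
    have hd0 : cden ξ 0 = 0 := rfl
    have hc0 : cnum ξ 0 = 1 := rfl
    rw [hd0, hc0]
    norm_num
  | n + 1 => by
    have ih := beta_sign ξ h hpos n
    have hrec := beta_rec ξ h n
    have hcqpos : 0 < cq ξ (n + 1) := lt_trans one_pos (one_lt_cq ξ h n)
    have hp : ((-1 : ℝ)) ^ (n + 1 + 1) = -((-1)^(n+1)) := by ring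
    rw [hp]
    have h2 : (-1:ℝ)^(n+1) * (((cden ξ (n+1) : ℝ) * ξ - cnum ξ (n+1)) * cq ξ (n+1))
        + (-1:ℝ)^(n+1) * ((cden ξ n : ℝ) * ξ - cnum ξ n) = 0 := by
      linear_combination ((-1:ℝ)^(n+1)) * hrec
    nlinarith [h2, ih, hcqpos]

set_option maxHeartbeats 1000000 in
/-- For a connected pair `(n,k)`, the quantity `r·ξ_n - s·η_k` is an integer
`t` with `-r + 1 ≤ t ≤ s - 1`. -/
theorem connected_complete_quotients_integer
    (ξ η : ℝ) (m : ℕ) (hξpos : 0 < ξ) (hηpos : 0 < η)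
    (hξirr : Irrational ξ) (hηirr : Irrational η) (hm : 0 < m)
    (hmul : ξ * η = m) (n k : ℕ) (hn : 1 ≤ n) (hk : 1 ≤ k)
    (hconn : cnum ξ n * cnum η k = (m : ℤ) * cden ξ n * cden η k) :
    ∃ t : ℤ,
      ((cnum ξ n / cden η k : ℤ) : ℝ) * cq ξ n -
        ((cnum η k / cden ξ n : ℤ) : ℝ) * cq η k = (t : ℝ) ∧
      -(cnum ξ n / cden η k) + 1 ≤ t ∧ t ≤ (cnum η k / cden ξ n) - 1 := by
  have hb0ξ : 0 ≤ pquot ξ 0 := Int.floor_nonneg.mpr hξpos.le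
  have hb0η : 0 ≤ pquot η 0 := Int.floor_nonneg.mpr hηpos.le
  obtain ⟨n', rfl⟩ : ∃ n', n = n' + 1 := ⟨n - 1, by omega⟩
  obtain ⟨k', rfl⟩ : ∃ k', k = k' + 1 := ⟨k - 1, by omega⟩
  have hq1 : 1 ≤ cden ξ (n'+1) := cden_ge_one ξ hξirr n'
  have hQ1 : 1 ≤ cden η (k'+1) := cden_ge_one η hηirr k'
  have hpn : 0 ≤ cnum ξ (n'+1) := cnum_nonneg ξ hξirr hb0ξ _
  have hPn : 0 ≤ cnum η (k'+1) := cnum_nonneg η hηirr hb0η _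
  have hm1 : 1 ≤ (m:ℤ) := by exact_mod_cast hm
  have hmq : 1 ≤ (m:ℤ) * cden ξ (n'+1) := by nlinarith
  have hmqQ : 1 ≤ (m:ℤ) * cden ξ (n'+1) * cden η (k'+1) := by nlinarith
  have hpP : 1 ≤ cnum ξ (n'+1) * cnum η (k'+1) := by rw [hconn]; exact hmqQ
  have hp1 : 1 ≤ cnum ξ (n'+1) := by nlinarith
  have hP1 : 1 ≤ cnum η (k'+1) := by nlinarith
  -- divisibility and definition of r and s
  have hcopη := isCoprime_cnum_cden η k'
  have hcopξ := isCoprime_cnum_cden ξ n'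
  have hdvdQ : cden η (k'+1) ∣ cnum ξ (n'+1) := by
    have h5 : cden η (k'+1) ∣ cnum ξ (n'+1) * cnum η (k'+1) := by
      rw [hconn]; exact Dvd.intro_left _ rfl
    exact (hcopη.symm).dvd_of_dvd_mul_right h5
  have hdvdq : cden ξ (n'+1) ∣ cnum η (k'+1) := by
    have h5 : cden ξ (n'+1) ∣ cnum η (k'+1) * cnum ξ (n'+1) := by
      rw [mul_comm, hconn]
      exact ⟨(m:ℤ) * cden η (k'+1), by ring⟩
    exact (hcopξ.symm).dvd_of_dvd_mul_right h5
  set r := cnum ξ (n'+1) / cden η (k'+1) with hr_def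
  set s := cnum η (k'+1) / cden ξ (n'+1) with hs_def
  have hr : cden η (k'+1) * r = cnum ξ (n'+1) := Int.mul_ediv_cancel' hdvdQ
  have hs : cden ξ (n'+1) * s = cnum η (k'+1) := Int.mul_ediv_cancel' hdvdq
  have hr1 : 1 ≤ r := by nlinarith
  have hs1 : 1 ≤ s := by nlinarith
  have hmrs : (m:ℤ) = r * s := by
    have hqQ : 0 < cden ξ (n'+1) * cden η (k'+1) := by nlinarith
    have hcanc : (m:ℤ) * (cden ξ (n'+1) * cden η (k'+1))
        = (r * s) * (cden ξ (n'+1) * cden η (k'+1)) := by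
      linear_combination -hconn - cnum η (k'+1) * hr - r * cden η (k'+1) * hs
    exact mul_right_cancel₀ (ne_of_gt hqQ) hcanc
  -- real facts
  have hβ := beta_rec ξ hξirr n'
  have hγ := beta_rec η hηirr k'
  have hβs := beta_sign ξ hξirr hξpos (n'+1)
  have hγs := beta_sign η hηirr hηpos (k'+1)
  have hrR : (cden η (k'+1) : ℝ) * (r:ℝ) = (cnum ξ (n'+1) : ℝ) := by exact_mod_cast hr
  have hsR : (cden ξ (n'+1) : ℝ) * (s:ℝ) = (cnum η (k'+1) : ℝ) := by exact_mod_cast hs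
  have hmrsR : (m:ℝ) = (r:ℝ) * (s:ℝ) := by exact_mod_cast hmrs
  have hE3 : ξ * ((cden η (k'+1) : ℝ) * η - cnum η (k'+1))
      = -(s:ℝ) * ((cden ξ (n'+1) : ℝ) * ξ - cnum ξ (n'+1)) := by
    linear_combination (cden η (k'+1) : ℝ) * hmul + (cden η (k'+1) : ℝ) * hmrsR
      + (s:ℝ) * hrR + ξ * hsR
  have hBne : ((cden ξ (n'+1) : ℝ) * ξ - cnum ξ (n'+1)) ≠ 0 := by
    intro h0
    rw [h0] at hβs
    simp at hβs
  -- parity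
  have hodd : Odd ((n'+1) + (k'+1)) := by
    by_contra hod
    have heven : Even ((n'+1) + (k'+1)) := Nat.not_odd_iff_even.mp hod
    have hprod := mul_pos hβs hγs
    have hone : ((-1:ℝ)^(n'+1+1)) * ((-1:ℝ)^(k'+1+1)) = 1 := by
      rw [← pow_add]
      refine Even.neg_one_pow ?_
      obtain ⟨c, hc⟩ := heven
      exact ⟨c + 1, by omega⟩
    have h3 : 0 < ((cden ξ (n'+1) : ℝ) * ξ - cnum ξ (n'+1))
        * ((cden η (k'+1) : ℝ) * η - cnum η (k'+1)) := by
      have := hprod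
      rw [show ((-1:ℝ)^(n'+1+1) * ((cden ξ (n'+1) : ℝ) * ξ - cnum ξ (n'+1)))
          * ((-1:ℝ)^(k'+1+1) * ((cden η (k'+1) : ℝ) * η - cnum η (k'+1)))
          = (((-1:ℝ)^(n'+1+1)) * ((-1:ℝ)^(k'+1+1)))
            * (((cden ξ (n'+1) : ℝ) * ξ - cnum ξ (n'+1))
              * ((cden η (k'+1) : ℝ) * η - cnum η (k'+1))) from by ring, hone, one_mul] at this
      exact this
    have hBsq : 0 < ((cden ξ (n'+1) : ℝ) * ξ - cnum ξ (n'+1))^2 := by positivity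
    have hs1R : (1:ℝ) ≤ (s:ℝ) := by exact_mod_cast hs1
    have h4 : ξ * (((cden ξ (n'+1) : ℝ) * ξ - cnum ξ (n'+1))
        * ((cden η (k'+1) : ℝ) * η - cnum η (k'+1)))
        = -(s:ℝ) * ((cden ξ (n'+1) : ℝ) * ξ - cnum ξ (n'+1))^2 := by
      linear_combination ((cden ξ (n'+1) : ℝ) * ξ - cnum ξ (n'+1)) * hE3
    have h5 : -(s:ℝ) * ((cden ξ (n'+1) : ℝ) * ξ - cnum ξ (n'+1))^2 < 0 := by nlinarith [hBsq, hs1R]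
    linarith [mul_pos hξpos h3, h4, h5]
  -- parity of powers
  have hpar : ((-1:ℤ))^(n'+1) = ((-1:ℤ))^(k'+2) := by
    obtain ⟨d, hd⟩ := hodd
    rcases Nat.even_or_odd (n'+1) with he | ho
    · obtain ⟨a, ha⟩ := id he
      have hke : Even (k'+2) := ⟨d + 1 - a, by omega⟩
      rw [Even.neg_one_pow he, Even.neg_one_pow hke]
    · obtain ⟨a, ha⟩ := id ho
      have hko : Odd (k'+2) := ⟨d - a, by omega⟩
      rw [Odd.neg_one_pow ho, Odd.neg_one_pow hko]
  -- the key integer identity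
  have hdetξ := det_eq ξ n'
  have hdetη := det_eq η k'
  have h7 : cnum ξ (n'+1) * (cnum η k' - r * cden ξ n')
      = cden ξ (n'+1) * ((m:ℤ) * cden η k' - r * cnum ξ n') := by
    linear_combination (-(cnum η k')) * hr - r * cden η k' * hs
      - cden ξ (n'+1) * cden η k' * hmrs - r * hdetη - r * hdetξ - r * hpar
  have hpne : cnum ξ (n'+1) ≠ 0 := by omega
  have hdvdt : cnum ξ (n'+1) ∣ ((m:ℤ) * cden η k' - r * cnum ξ n') := by
    have h5 : cnum ξ (n'+1) ∣ cden ξ (n'+1) * ((m:ℤ) * cden η k' - r * cnum ξ n') := by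
      exact ⟨cnum η k' - r * cden ξ n', h7.symm⟩
    exact hcopξ.dvd_of_dvd_mul_left h5
  obtain ⟨t, ht⟩ := hdvdt
  -- ht : m * cden η k' - r * cnum ξ n' = cnum ξ (n'+1) * t
  have hE4 : cden ξ (n'+1) * t = cnum η k' - r * cden ξ n' := by
    have h8 : cnum ξ (n'+1) * (cden ξ (n'+1) * t) = cnum ξ (n'+1) * (cnum η k' - r * cden ξ n') := by
      rw [h7, ht]; ring
    exact mul_left_cancel₀ hpne h8
  refine ⟨t, ?_, ?_, ?_⟩
  · -- real identity
    have hE4R : (cden ξ (n'+1) : ℝ) * (t:ℝ) = (cnum η k' : ℝ) - (r:ℝ) * (cden ξ n' : ℝ) := by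
      exact_mod_cast hE4
    have hE5R : ((m:ℝ)) * (cden η k' : ℝ) - (r:ℝ) * (cnum ξ n' : ℝ)
        = (cnum ξ (n'+1) : ℝ) * (t:ℝ) := by exact_mod_cast ht
    have key : ((cden ξ (n'+1) : ℝ) * ξ - cnum ξ (n'+1))
        * ((r:ℝ) * cq ξ (n'+1) - (s:ℝ) * cq η (k'+1))
        = ((cden ξ (n'+1) : ℝ) * ξ - cnum ξ (n'+1)) * (t:ℝ) := by
      linear_combination (r:ℝ) * hβ - cq η (k'+1) * hE3 + ξ * hγ
        - ξ * hE4R - hE5R - (cden η k' : ℝ) * hmul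
    have := mul_left_cancel₀ hBne key
    linarith [this]
  · -- lower bound
    have hkey : 1 ≤ r + t := by
      have hstep : 0 < (r + t) * cnum ξ (n'+1) := by
        have he : (r + t) * cnum ξ (n'+1)
            = r * (cnum ξ (n'+1) - cnum ξ n') + (m:ℤ) * cden η k' := by
          linear_combination -ht
        rw [he]
        rcases Nat.eq_zero_or_pos k' with hk0 | hkpos
        · -- k' = 0 : parity forces n' odd, so n'-1 even
          subst hk0
          have hQ'0 : cden η 0 = 0 := rfl
          rw [hQ'0]
          have hno : Odd n' := by
            rcases Nat.even_or_odd n' with he2 | ho2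
            · exfalso
              obtain ⟨c, hc⟩ := he2
              obtain ⟨d, hd⟩ := hodd
              omega
            · exact ho2
          obtain ⟨j, hj⟩ := hno
          have hj1 : n' = (2*j) + 1 := by omega
          have hch : cnum ξ (2*j) + cnum ξ (n') ≤ cnum ξ (n'+1) := by
            rw [hj1]
            have h9 := cnum_add_le ξ hξirr hb0ξ (2*j)
            have he2 : 2*j + 1 + 1 = 2*j + 2 := by omega
            rw [he2]
            linarith [h9]
          have hce := cnum_even_ge_one ξ hξirr hb0ξ j
          nlinarith
        · -- k' ≥ 1
          have hQ'1 : 1 ≤ cden η k' := by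
            obtain ⟨k'', rfl⟩ : ∃ k'', k' = k'' + 1 := ⟨k' - 1, by omega⟩
            exact cden_ge_one η hηirr k''
          have hmono : cnum ξ n' ≤ cnum ξ (n'+1) := by
            rcases Nat.eq_zero_or_pos n' with hn0 | hnpos
            · subst hn0
              have : cnum ξ 0 = 1 := rfl
              omega
            · obtain ⟨n'', rfl⟩ : ∃ n'', n' = n'' + 1 := ⟨n' - 1, by omega⟩
              exact cnum_mono ξ hξirr hb0ξ n''
          nlinarith
      nlinarith
    omega
  · -- upper bound
    have hkey : 1 ≤ s - t := by
      have hstep : 0 < (s - t) * cnum ξ (n'+1) := by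
        have he : (s - t) * cnum ξ (n'+1)
            = (m:ℤ) * (cden η (k'+1) - cden η k') + r * cnum ξ n' := by
          linear_combination ht - s * hr - cden η (k'+1) * hmrs
        rw [he]
        by_cases hp'0 : cnum ξ n' = 0
        · -- then n' = 1 and cden η k' < cden η (k'+1)
          have hn'1 : n' = 1 := by
            match n', hp'0 with
            | 0, hp'0 => exact absurd hp'0 (by norm_num [cnum])
            | 1, hp'0 => rfl
            | (i+2), hp'0 =>
              have := cnum_ge_one_of_two ξ hξirr hb0ξ i
              omega
          have hQlt : cden η k' < cden η (k'+1) := by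
            match k' with
            | 0 => norm_num [cden]
            | 1 =>
              exfalso
              obtain ⟨d, hd⟩ := hodd
              omega
            | (i+2) =>
              have h9 : cden η (i+2) + cden η (i+1) ≤ cden η (i+2+1) :=
                cden_add_le η hηirr (i+1)
              have h10 : 1 ≤ cden η (i+1) := cden_ge_one η hηirr i
              omega
          nlinarith
        · have hp'1 : 1 ≤ cnum ξ n' := by
            have := cnum_nonneg ξ hξirr hb0ξ n'
            omega
          have hQle : cden η k' ≤ cden η (k'+1) := cden_mono η hηirr k'
          nlinarith
      nlinarith
    omega
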